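/- arXiv:2005.06428 — 2 statements merged into one kernel-verified Lean document; each statement's English description precedes it below -/
import Mathlib

section
/- For a code ensemble with M codewords drawn according to a joint distribution P_{X(1)...X(M)} such that every subset of codewords of equal size has the same marginal distribution (exchangeability), under maximum likelihood decoding over a channel P_{Y|X}, the ensemble-average error probability ε satisfies ε ≤ E[min{1, (M−1)·Pr[i(X̄;Y) ≥ i(X;Y) | X,Y]}], where (X, X̄) are distributed as the first two codewords and Y is the channel output given X. -/
open scoped BigOperators Classical

noncomputable section

/-- The set of ML-optimal messages for codebook `c` and channel output `y`. -/
def mlSet {A Y : Type*} {M : ℕ} (W : A → Y → ℝ) (c : Fin M → A) (y : Y) :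
    Finset (Fin M) :=
  Finset.univ.filter (fun j => ∀ k, W (c k) y ≤ W (c j) y)

/-- Average error probability of codebook `c` over channel `W` under maximum
likelihood decoding, with ties broken uniformly at random. -/
def mlError {A Y : Type*} [Fintype Y] {M : ℕ} (W : A → Y → ℝ) (c : Fin M → A) : ℝ :=
  (M : ℝ)⁻¹ * ∑ j : Fin M, ∑ y : Y,
    W (c j) y * (1 - if j ∈ mlSet W c y then ((mlSet W c y).card : ℝ)⁻¹ else 0)

/-- Number of competitors `k ≠ j` whose likelihood is at least that of `j`. -/
def Nr {X Y : Type*} {M : ℕ} (W : X → Y → ℝ) (c : Fin M → X) (j : Fin M) (y : Y) : ℝ :=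
  ((Finset.univ.filter fun k => k ≠ j ∧ W (c j) y ≤ W (c k) y).card : ℝ)

/-- Union-type bound on the conditional error, per message. -/
def gfun {X Y : Type*} [Fintype Y] {M : ℕ} (W : X → Y → ℝ) (j : Fin M) (c : Fin M → X) : ℝ :=
  ∑ y, W (c j) y * min 1 (Nr W c j y)

/-- Pointwise bound: ML error indicator is at most `min 1 (Nr)`. -/
theorem stepA_aux {X Y : Type*} {M : ℕ} (W : X → Y → ℝ) (c : Fin M → X) (j : Fin M) (y : Y) :
    (1 - if j ∈ mlSet W c y then ((mlSet W c y).card : ℝ)⁻¹ else 0) ≤ min 1 (Nr W c j y) := by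
  have hNnn : (0:ℝ) ≤ Nr W c j y := Nat.cast_nonneg _
  by_cases hj : j ∈ mlSet W c y
  · rw [if_pos hj]
    have hcard : 0 < (mlSet W c y).card := Finset.card_pos.2 ⟨j, hj⟩
    have ht1 : (1:ℝ) ≤ ((mlSet W c y).card : ℝ) := by exact_mod_cast hcard
    refine le_min ?_ ?_
    · have h0 : (0:ℝ) ≤ ((mlSet W c y).card : ℝ)⁻¹ := by positivity
      linarith
    · have hsub : (mlSet W c y).erase j ⊆
          Finset.univ.filter (fun k => k ≠ j ∧ W (c j) y ≤ W (c k) y) := by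
        intro k hk
        rcases Finset.mem_erase.1 hk with ⟨hkj, hkm⟩
        simp only [mlSet, Finset.mem_filter, Finset.mem_univ, true_and] at hkm ⊢
        exact ⟨hkj, hkm j⟩
      have hc2 : ((mlSet W c y).card : ℝ) - 1 ≤ Nr W c j y := by
        have h1 := Finset.card_le_card hsub
        rw [Finset.card_erase_of_mem hj] at h1
        have h2 : ((mlSet W c y).card - 1 : ℕ) = ((mlSet W c y).card : ℝ) - 1 := by
          push_cast [Nat.cast_sub hcard]; ring
        unfold Nr
        rw [← h2]; exact_mod_cast h1
      have ht0 : (0:ℝ) < ((mlSet W c y).card : ℝ) := by linarith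
      have hinv : ((mlSet W c y).card:ℝ)⁻¹ * ((mlSet W c y).card:ℝ) = 1 :=
        inv_mul_cancel₀ (ne_of_gt ht0)
      nlinarith [sq_nonneg (((mlSet W c y).card:ℝ) - 1)]
  · rw [if_neg hj]
    have hex : ∃ k, ¬ W (c k) y ≤ W (c j) y := by
      simpa [mlSet] using hj
    obtain ⟨k, hk⟩ := hex
    have hkj : k ≠ j := by rintro rfl; exact hk le_rfl
    have h1 : (1:ℝ) ≤ Nr W c j y := by
      have hp : 0 < (Finset.univ.filter fun k' => k' ≠ j ∧ W (c j) y ≤ W (c k') y).card :=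
        Finset.card_pos.2 ⟨k, by simp [hkj, le_of_lt (lt_of_not_ge hk)]⟩
      unfold Nr
      exact_mod_cast hp
    simpa using le_min le_rfl h1

theorem inj2_aux {M : ℕ} {u v : Fin M} (h : u ≠ v) : Function.Injective ![u, v] := by
  intro i j hij
  fin_cases i <;> fin_cases j <;> simp_all

set_option maxHeartbeats 2000000 in
/-- **RCU bound for exchangeable (possibly dependent) codeword ensembles.**
If the `M` codewords are drawn from a joint distribution `Pcb` in which every
subset of codewords of equal size has the same marginal, then the
ensemble-average ML error probability `ε` satisfies
`ε ≤ E[min{1, (M−1)·Pr[i(X̄;Y) ≥ i(X;Y) | X,Y]}]`, where `(X,X̄)` are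
distributed as the first two codewords and `Y` is the output given `X`. -/
theorem rcu_bound_exchangeable
    {X Y : Type*} [Fintype X] [Fintype Y]
    (M : ℕ) (hM : 2 ≤ M)
    (W : X → Y → ℝ) (hW0 : ∀ x y, 0 ≤ W x y) (hW1 : ∀ x, ∑ y, W x y = 1)
    (Pcb : (Fin M → X) → ℝ) (hPcb0 : ∀ c, 0 ≤ Pcb c) (hPcb1 : ∑ c, Pcb c = 1)
    (hexch : ∀ (k : ℕ) (σ τ : Fin k → Fin M),
      Function.Injective σ → Function.Injective τ → ∀ v : Fin k → X,
        (∑ c ∈ Finset.univ.filter (fun c : Fin M → X => ∀ i, c (σ i) = v i), Pcb c) =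
        (∑ c ∈ Finset.univ.filter (fun c : Fin M → X => ∀ i, c (τ i) = v i), Pcb c))
    (P2 : X → X → ℝ)
    (hP2 : ∀ a b, P2 a b =
      ∑ c ∈ Finset.univ.filter
        (fun c : Fin M → X => c ⟨0, by omega⟩ = a ∧ c ⟨1, by omega⟩ = b), Pcb c)
    (P1 : X → ℝ) (hP1 : ∀ a, P1 a = ∑ b, P2 a b)
    (PY : Y → ℝ) (hPY : ∀ y, PY y = ∑ x, P1 x * W x y)
    (info : X → Y → ℝ) (hinfo : ∀ x y, info x y = Real.log (W x y / PY y))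
    (ε : ℝ) (hε : ε = ∑ c, Pcb c * mlError W c) :
    ε ≤ ∑ a, ∑ y, P1 a * W a y *
      min 1 ((M - 1 : ℝ) *
        ((∑ b ∈ Finset.univ.filter (fun b : X => info a y ≤ info b y), P2 a b) /
          P1 a)) := by
    classical
  set j0 : Fin M := ⟨0, by omega⟩ with hj0def
  set j1 : Fin M := ⟨1, by omega⟩ with hj1def
  have hj01 : j1 ≠ j0 := by simp [hj0def, hj1def, Fin.ext_iff]
  -- nonnegativity facts
  have hP20 : ∀ a b, 0 ≤ P2 a b := by
    intro a b; rw [hP2]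
    exact Finset.sum_nonneg fun c _ => hPcb0 c
  have hP1nn : ∀ a, 0 ≤ P1 a := by
    intro a; rw [hP1]
    exact Finset.sum_nonneg fun b _ => hP20 a b
  -- permutation invariance of Pcb
  have hperm : ∀ (σ : Equiv.Perm (Fin M)) (c : Fin M → X), Pcb (c ∘ σ) = Pcb c := by
    intro σ c
    have h := hexch M σ id σ.injective Function.injective_id (c ∘ σ)
    have e1 : (Finset.univ.filter (fun d : Fin M → X => ∀ i, d (σ i) = (c ∘ σ) i)) = {c} := by
      ext d
      simp only [Finset.mem_filter, Finset.mem_univ, true_and, Finset.mem_singleton,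
        Function.comp]
      constructor
      · intro h'; funext j; simpa using h' (σ.symm j)
      · rintro rfl i; rfl
    have e2 : (Finset.univ.filter (fun d : Fin M → X => ∀ i, d (id i) = (c ∘ σ) i))
        = {c ∘ σ} := by
      ext d
      simp only [Finset.mem_filter, Finset.mem_univ, true_and, Finset.mem_singleton, id]
      constructor
      · intro h'; funext j; exact h' j
      · rintro rfl i; rfl
    rw [e1, e2, Finset.sum_singleton, Finset.sum_singleton] at h
    exact h.symm
  -- pairwise marginals
  have hpair : ∀ k : Fin M, k ≠ j0 → ∀ a b : X,
      (∑ c ∈ Finset.univ.filter (fun c : Fin M → X => c j0 = a ∧ c k = b), Pcb c)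
        = P2 a b := by
    intro k hk a b
    have hσ : Function.Injective ![j0, k] := inj2_aux (Ne.symm hk)
    have hτ : Function.Injective ![j0, j1] := inj2_aux (Ne.symm hj01)
    have h := hexch 2 ![j0, k] ![j0, j1] hσ hτ ![a, b]
    have e : ∀ u : Fin M,
        (Finset.univ.filter (fun c : Fin M → X => ∀ i, c (![j0, u] i) = ![a, b] i))
        = Finset.univ.filter (fun c : Fin M → X => c j0 = a ∧ c u = b) := by
      intro u; ext c; simp [Fin.forall_fin_two]
    rw [e k, e j1] at h
    rw [h, hP2 a b]
  -- first marginal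
  have hP1' : ∀ a : X, (∑ c ∈ Finset.univ.filter (fun c : Fin M → X => c j0 = a), Pcb c)
      = P1 a := by
    intro a
    rw [hP1,
      ← Finset.sum_fiberwise (Finset.univ.filter (fun c : Fin M → X => c j0 = a))
      (fun c => c j1) Pcb]
    refine Finset.sum_congr rfl fun b _ => ?_
    rw [Finset.filter_filter, ← hpair j1 hj01 a b]
  -- reindexing sums by permutations of codewords
  have sum_perm : ∀ (σ : Equiv.Perm (Fin M)) (F : (Fin M → X) → ℝ),
      (∑ c : Fin M → X, F (c ∘ σ)) = ∑ c : Fin M → X, F c := by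
    intro σ F
    exact Fintype.sum_equiv (Equiv.arrowCongr σ.symm (Equiv.refl X)) _ _
      (fun c => by simp [Equiv.arrowCongr, Function.comp])
  -- step B : reduce message index j to j0
  have stepB : ∀ j : Fin M, (∑ c, Pcb c * gfun W j c) = ∑ c, Pcb c * gfun W j0 c := by
    intro j
    set σ := Equiv.swap j0 j with hσdef
    rw [← sum_perm σ (fun c => Pcb c * gfun W j c)]
    refine Finset.sum_congr rfl fun c _ => ?_
    rw [hperm]
    congr 1
    unfold gfun
    refine Finset.sum_congr rfl fun y _ => ?_
    have hσj : σ j = j0 := Equiv.swap_apply_right j0 j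
    have hval : (c ∘ σ) j = c j0 := by simp [Function.comp, hσj]
    have hNrr : Nr W (c ∘ σ) j y = Nr W c j0 y := by
      unfold Nr
      norm_cast
      refine Finset.card_bij' (fun k _ => σ k) (fun k _ => σ k) ?_ ?_ ?_ ?_
      · intro k hk
        simp only [Finset.mem_filter, Finset.mem_univ, true_and] at hk ⊢
        refine ⟨fun h => hk.1 (σ.injective (h.trans hσj.symm)), ?_⟩
        simpa [Function.comp, hσj] using hk.2
      · intro k hk
        simp only [Finset.mem_filter, Finset.mem_univ, true_and] at hk ⊢
        refine ⟨?_, ?_⟩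
        · intro h
          apply hk.1
          have : σ (σ k) = σ j := by rw [h]
          simpa [hσdef, Equiv.swap_apply_self, hσj] using this
        · simpa [Function.comp, hσj, hσdef, Equiv.swap_apply_self] using hk.2
      · intro k _; simp [hσdef, Equiv.swap_apply_self]
      · intro k _; simp [hσdef, Equiv.swap_apply_self]
    rw [hval, hNrr]
  -- key per (a,y) bound
  have hMR : (2:ℝ) ≤ (M:ℝ) := by exact_mod_cast hM
  have key : ∀ (a : X) (y : Y),
      (∑ c ∈ Finset.univ.filter (fun c : Fin M → X => c j0 = a),
        Pcb c * (W (c j0) y * min 1 (Nr W c j0 y)))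
      ≤ P1 a * W a y * min 1 ((M - 1 : ℝ) *
          ((∑ b ∈ Finset.univ.filter (fun b : X => info a y ≤ info b y), P2 a b) / P1 a)) := by
    intro a y
    set Qy := ∑ b ∈ Finset.univ.filter (fun b : X => info a y ≤ info b y), P2 a b with hQydef
    have hQy0 : 0 ≤ Qy := Finset.sum_nonneg fun b _ => hP20 a b
    have hmin0 : 0 ≤ min 1 ((M - 1 : ℝ) * (Qy / P1 a)) :=
      le_min zero_le_one (mul_nonneg (by linarith) (div_nonneg hQy0 (hP1nn a)))
    have hRnn : 0 ≤ P1 a * W a y * min 1 ((M - 1 : ℝ) * (Qy / P1 a)) :=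
      mul_nonneg (mul_nonneg (hP1nn a) (hW0 a y)) hmin0
    by_cases hPa : P1 a = 0
    · have hsum0 : (∑ c ∈ Finset.univ.filter (fun c : Fin M → X => c j0 = a), Pcb c) = 0 := by
        rw [hP1' a, hPa]
      have hz : ∀ c ∈ Finset.univ.filter (fun c : Fin M → X => c j0 = a), Pcb c = 0 :=
        (Finset.sum_eq_zero_iff_of_nonneg fun c _ => hPcb0 c).1 hsum0
      calc (∑ c ∈ Finset.univ.filter (fun c : Fin M → X => c j0 = a),
            Pcb c * (W (c j0) y * min 1 (Nr W c j0 y)))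
          = 0 := Finset.sum_eq_zero fun c hc => by rw [hz c hc, zero_mul]
        _ ≤ _ := hRnn
    by_cases hWay : W a y = 0
    · calc (∑ c ∈ Finset.univ.filter (fun c : Fin M → X => c j0 = a),
            Pcb c * (W (c j0) y * min 1 (Nr W c j0 y)))
          = 0 := Finset.sum_eq_zero fun c hc => by
            have hca : c j0 = a := (Finset.mem_filter.1 hc).2
            rw [hca, hWay]; ring
        _ ≤ _ := hRnn
    have hPa' : 0 < P1 a := (hP1nn a).lt_of_ne (Ne.symm hPa)
    have hWay' : 0 < W a y := (hW0 a y).lt_of_ne (Ne.symm hWay)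
    set s := Finset.univ.filter (fun c : Fin M → X => c j0 = a) with hsdef
    have hL : (∑ c ∈ s, Pcb c * (W (c j0) y * min 1 (Nr W c j0 y)))
        = W a y * ∑ c ∈ s, Pcb c * min 1 (Nr W c j0 y) := by
      rw [Finset.mul_sum]
      refine Finset.sum_congr rfl fun c hc => ?_
      have hca : c j0 = a := (Finset.mem_filter.1 hc).2
      rw [hca]; ring
    rw [hL]
    set qy := ∑ b ∈ Finset.univ.filter (fun b : X => W a y ≤ W b y), P2 a b with hqydef
    have hqQ : qy ≤ Qy := by
      refine Finset.sum_le_sum_of_subset_of_nonneg ?_ (fun b _ _ => hP20 a b)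
      intro b hb
      simp only [Finset.mem_filter, Finset.mem_univ, true_and] at hb ⊢
      have hPY0 : 0 < PY y := by
        rw [hPY]
        have h1 : 0 < P1 a * W a y := mul_pos hPa' hWay'
        have h2 : ∀ x ∈ Finset.univ, 0 ≤ P1 x * W x y :=
          fun x _ => mul_nonneg (hP1nn x) (hW0 x y)
        exact lt_of_lt_of_le h1 (Finset.single_le_sum h2 (Finset.mem_univ a))
      rw [hinfo, hinfo]
      apply Real.log_le_log (div_pos hWay' hPY0)
      gcongr
    have hNsum : ∀ c : Fin M → X, Nr W c j0 y
        = ∑ k : Fin M, (if k ≠ j0 ∧ W (c j0) y ≤ W (c k) y then (1:ℝ) else 0) := by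
      intro c
      unfold Nr
      rw [Finset.card_filter]
      push_cast
      simp
    have hS2 : (∑ c ∈ s, Pcb c * Nr W c j0 y) = (M - 1 : ℝ) * qy := by
      calc ∑ c ∈ s, Pcb c * Nr W c j0 y
          = ∑ c ∈ s, ∑ k : Fin M,
              Pcb c * (if k ≠ j0 ∧ W (c j0) y ≤ W (c k) y then (1:ℝ) else 0) := by
            refine Finset.sum_congr rfl fun c _ => ?_
            rw [hNsum c, Finset.mul_sum]
        _ = ∑ k : Fin M, ∑ c ∈ s,
              Pcb c * (if k ≠ j0 ∧ W (c j0) y ≤ W (c k) y then (1:ℝ) else 0) :=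
            Finset.sum_comm
        _ = ∑ k : Fin M, (if k = j0 then 0 else qy) := by
            refine Finset.sum_congr rfl fun k _ => ?_
            by_cases hkj : k = j0
            · subst hkj; simp
            · rw [if_neg hkj]
              calc ∑ c ∈ s, Pcb c * (if k ≠ j0 ∧ W (c j0) y ≤ W (c k) y then (1:ℝ) else 0)
                  = ∑ c ∈ s, Pcb c * (if W a y ≤ W (c k) y then (1:ℝ) else 0) := by
                    refine Finset.sum_congr rfl fun c hc => ?_
                    have hca : c j0 = a := (Finset.mem_filter.1 hc).2
                    rw [hca]
                    congr 1
                    simp [hkj]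
                _ = ∑ b, ∑ c ∈ s.filter (fun c => c k = b),
                      Pcb c * (if W a y ≤ W (c k) y then (1:ℝ) else 0) :=
                    (Finset.sum_fiberwise s (fun c => c k) _).symm
                _ = ∑ b, (if W a y ≤ W b y then (1:ℝ) else 0) * P2 a b := by
                    refine Finset.sum_congr rfl fun b _ => ?_
                    have hterm : ∀ c ∈ s.filter (fun c => c k = b),
                        Pcb c * (if W a y ≤ W (c k) y then (1:ℝ) else 0)
                        = (if W a y ≤ W b y then (1:ℝ) else 0) * Pcb c := by
                      intro c hc
                      have hcb : c k = b := (Finset.mem_filter.1 hc).2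
                      rw [hcb]; ring
                    rw [Finset.sum_congr rfl hterm, ← Finset.mul_sum]
                    congr 1
                    rw [hsdef, Finset.filter_filter]
                    exact hpair k hkj a b
                _ = qy := by
                    rw [hqydef, Finset.sum_filter]
                    refine Finset.sum_congr rfl fun b _ => ?_
                    split <;> simp
        _ = (M - 1 : ℝ) * qy := by
            have h1 : (∑ k : Fin M, (if k = j0 then (0:ℝ) else qy))
                = (∑ _k : Fin M, qy) - ∑ k : Fin M, (if k = j0 then qy else 0) := by
              rw [← Finset.sum_sub_distrib]
              refine Finset.sum_congr rfl fun k _ => by split <;> ring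
            rw [h1, Finset.sum_const, Finset.card_univ, Fintype.card_fin,
              Finset.sum_ite_eq' Finset.univ j0 fun _ => qy]
            simp only [Finset.mem_univ, if_true, nsmul_eq_mul]
            ring
    have hS1 : (∑ c ∈ s, Pcb c * min 1 (Nr W c j0 y)) ≤ P1 a := by
      calc (∑ c ∈ s, Pcb c * min 1 (Nr W c j0 y)) ≤ ∑ c ∈ s, Pcb c * 1 :=
            Finset.sum_le_sum fun c _ =>
              mul_le_mul_of_nonneg_left (min_le_left _ _) (hPcb0 c)
        _ = P1 a := by rw [← hP1' a]; simp [hsdef]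
    have hS2' : (∑ c ∈ s, Pcb c * min 1 (Nr W c j0 y)) ≤ (M - 1 : ℝ) * Qy := by
      calc (∑ c ∈ s, Pcb c * min 1 (Nr W c j0 y)) ≤ ∑ c ∈ s, Pcb c * Nr W c j0 y :=
            Finset.sum_le_sum fun c _ =>
              mul_le_mul_of_nonneg_left (min_le_right _ _) (hPcb0 c)
        _ = (M - 1 : ℝ) * qy := hS2
        _ ≤ (M - 1 : ℝ) * Qy := mul_le_mul_of_nonneg_left hqQ (by linarith)
    have hfin : P1 a * W a y * min 1 ((M - 1 : ℝ) * (Qy / P1 a))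
        = W a y * min (P1 a) ((M - 1 : ℝ) * Qy) := by
      have h2 : P1 a * ((M - 1 : ℝ) * (Qy / P1 a)) = (M - 1 : ℝ) * Qy := by
        field_simp
      calc P1 a * W a y * min 1 ((M - 1 : ℝ) * (Qy / P1 a))
          = W a y * (P1 a * min 1 ((M - 1 : ℝ) * (Qy / P1 a))) := by ring
        _ = W a y * min (P1 a * 1) (P1 a * ((M - 1 : ℝ) * (Qy / P1 a))) := by
            rw [mul_min_of_nonneg _ _ hPa'.le]
        _ = _ := by rw [mul_one, h2]
    rw [hfin]
    exact mul_le_mul_of_nonneg_left (le_min hS1 hS2') (hW0 a y)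
  -- final assembly
  have hMne : (M:ℝ) ≠ 0 := by positivity
  calc ε = ∑ c, Pcb c * mlError W c := hε
    _ ≤ ∑ c, Pcb c * ((M:ℝ)⁻¹ * ∑ j, gfun W j c) := by
        refine Finset.sum_le_sum fun c _ => mul_le_mul_of_nonneg_left ?_ (hPcb0 c)
        unfold mlError gfun
        refine mul_le_mul_of_nonneg_left ?_ (by positivity)
        refine Finset.sum_le_sum fun j _ => Finset.sum_le_sum fun y _ => ?_
        exact mul_le_mul_of_nonneg_left (stepA_aux W c j y) (hW0 _ y)
    _ = ∑ c, (M:ℝ)⁻¹ * ∑ j, Pcb c * gfun W j c := by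
        refine Finset.sum_congr rfl fun c _ => ?_
        simp only [Finset.mul_sum]
        exact Finset.sum_congr rfl fun j _ => by ring
    _ = (M:ℝ)⁻¹ * ∑ c, ∑ j, Pcb c * gfun W j c := by rw [Finset.mul_sum]
    _ = (M:ℝ)⁻¹ * ∑ j, ∑ c, Pcb c * gfun W j c := by rw [Finset.sum_comm]
    _ = (M:ℝ)⁻¹ * ∑ _j : Fin M, ∑ c, Pcb c * gfun W j0 c := by
        rw [Finset.sum_congr rfl fun j _ => stepB j]
    _ = ∑ c, Pcb c * gfun W j0 c := by
        rw [Finset.sum_const, Finset.card_univ, Fintype.card_fin, nsmul_eq_mul, ← mul_assoc,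
          inv_mul_cancel₀ hMne, one_mul]
    _ = ∑ y, ∑ a, ∑ c ∈ Finset.univ.filter (fun c : Fin M → X => c j0 = a),
          Pcb c * (W (c j0) y * min 1 (Nr W c j0 y)) := by
        calc ∑ c, Pcb c * gfun W j0 c
            = ∑ c, ∑ y, Pcb c * (W (c j0) y * min 1 (Nr W c j0 y)) := by
              refine Finset.sum_congr rfl fun c _ => ?_
              unfold gfun; rw [Finset.mul_sum]
          _ = ∑ y, ∑ c, Pcb c * (W (c j0) y * min 1 (Nr W c j0 y)) := by
              rw [Finset.sum_comm]
          _ = _ := by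
              refine Finset.sum_congr rfl fun y _ => ?_
              exact (Finset.sum_fiberwise Finset.univ (fun c : Fin M → X => c j0) (fun c => Pcb c * (W (c j0) y * min 1 (Nr W c j0 y)))).symm
    _ ≤ ∑ y, ∑ a, P1 a * W a y *
          min 1 ((M - 1 : ℝ) *
            ((∑ b ∈ Finset.univ.filter (fun b : X => info a y ≤ info b y), P2 a b) / P1 a)) :=
        Finset.sum_le_sum fun y _ => Finset.sum_le_sum fun a _ => key a y
    _ = _ := by rw [Finset.sum_comm]
end
end

section
/- Consider a two-transmitter MAC code ensemble with M₁ and M₂ codewords drawn independently from exchangeable distributions P_{X₁(1)...X₁(M₁)} and P_{X₂(1)...X₂(M₂)}. Under ML decoding, the ensemble-average error probability ε satisfies ε ≤ E[min{1, V₁+V₂+V₁₂}], where V₁ = (M₁−1)·Pr[i(X̄₁;Y|X₂) ≥ i(X₁;Y|X₂) | X₁,X₂,Y], V₂ = (M₂−1)·Pr[i(X̄₂;Y|X₁) ≥ i(X₂;Y|X₁) | X₁,X₂,Y], and V₁₂ = (M₁−1)(M₂−1)·Pr[i(X̄₁,X̄₂;Y) ≥ i(X₁,X₂;Y) | X₁,X₂,Y].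 -/
open scoped BigOperators Classical

noncomputable section

/-- The set of ML-optimal message pairs for MAC codebooks `c1, c2` and output `y`. -/
def mlSetPair {A1 A2 B : Type*} {M1 M2 : ℕ} (W : A1 → A2 → B → ℝ)
    (c1 : Fin M1 → A1) (c2 : Fin M2 → A2) (y : B) : Finset (Fin M1 × Fin M2) :=
  Finset.univ.filter (fun ij => ∀ kl : Fin M1 × Fin M2,
    W (c1 kl.1) (c2 kl.2) y ≤ W (c1 ij.1) (c2 ij.2) y)

/-- Average error probability of the MAC codebook pair `(c1, c2)` under
maximum likelihood decoding with ties broken uniformly at random. -/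
def mlErrorMac {A1 A2 B : Type*} [Fintype B] {M1 M2 : ℕ} (W : A1 → A2 → B → ℝ)
    (c1 : Fin M1 → A1) (c2 : Fin M2 → A2) : ℝ :=
  ((M1 * M2 : ℕ) : ℝ)⁻¹ * ∑ ij : Fin M1 × Fin M2, ∑ y : B,
    W (c1 ij.1) (c2 ij.2) y *
      (1 - if ij ∈ mlSetPair W c1 c2 y
        then ((mlSetPair W c1 c2 y).card : ℝ)⁻¹ else 0)

/-! ### Auxiliary lemmas -/

/-- Exchangeability implies full permutation invariance of the codebook law. -/
lemma exch_perm_invariant {X : Type*} [Fintype X] {M : ℕ} (P : (Fin M → X) → ℝ)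
    (hexch : ∀ (k : ℕ) (σ τ : Fin k → Fin M),
      Function.Injective σ → Function.Injective τ → ∀ v : Fin k → X,
        (∑ c ∈ Finset.univ.filter (fun c : Fin M → X => ∀ i, c (σ i) = v i), P c) =
        (∑ c ∈ Finset.univ.filter (fun c : Fin M → X => ∀ i, c (τ i) = v i), P c))
    (π : Equiv.Perm (Fin M)) (v : Fin M → X) : P (v ∘ π) = P v := by
  have h := hexch M id π.symm Function.injective_id π.symm.injective v
  have h1 : Finset.univ.filter (fun c : Fin M → X => ∀ i, c (id i) = v i) = {v} := by
    ext c; simp [funext_iff]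
  have h2 : Finset.univ.filter (fun c : Fin M → X => ∀ i, c (π.symm i) = v i) = {v ∘ π} := by
    ext c
    simp only [Finset.mem_filter, Finset.mem_univ, true_and, Finset.mem_singleton]
    constructor
    · intro h; funext j
      have := h (π j); simpa using this
    · rintro rfl i; simp
  rw [h1, h2] at h
  simp only [Finset.sum_singleton] at h
  exact h.symm

/-- Pair marginal at any two distinct indices equals pair marginal at (0,1). -/
lemma exch_pair_marginal {X : Type*} [Fintype X] {M : ℕ} (hM : 2 ≤ M) (P : (Fin M → X) → ℝ)
    (hexch : ∀ (k : ℕ) (σ τ : Fin k → Fin M),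
      Function.Injective σ → Function.Injective τ → ∀ v : Fin k → X,
        (∑ c ∈ Finset.univ.filter (fun c : Fin M → X => ∀ i, c (σ i) = v i), P c) =
        (∑ c ∈ Finset.univ.filter (fun c : Fin M → X => ∀ i, c (τ i) = v i), P c))
    (i j : Fin M) (hij : i ≠ j) (a b : X) :
    (∑ c ∈ Finset.univ.filter (fun c : Fin M → X => c i = a ∧ c j = b), P c) =
    (∑ c ∈ Finset.univ.filter
        (fun c : Fin M → X => c ⟨0, by omega⟩ = a ∧ c ⟨1, by omega⟩ = b), P c) := by
  have hσ : Function.Injective (![i, j]) := by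
    intro x y h
    fin_cases x <;> fin_cases y <;> simp_all
  have hτ : Function.Injective (![(⟨0, by omega⟩ : Fin M), ⟨1, by omega⟩]) := by
    intro x y h
    fin_cases x <;> fin_cases y <;> simp_all [Fin.ext_iff]
  have h := hexch 2 (![i, j]) (![(⟨0, by omega⟩ : Fin M), ⟨1, by omega⟩]) hσ hτ ![a, b]
  have e1 : ∀ (u w : Fin M),
      (Finset.univ.filter (fun c : Fin M → X => ∀ t, c (![u, w] t) = ![a, b] t))
      = Finset.univ.filter (fun c : Fin M → X => c u = a ∧ c w = b) := by
    intro u w; ext c; simp [Fin.forall_fin_two]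
  rw [e1, e1] at h
  exact h

lemma mlSetPair_comp {A1 A2 B : Type*} {M1 M2 : ℕ} (W : A1 → A2 → B → ℝ)
    (c1 : Fin M1 → A1) (c2 : Fin M2 → A2) (y : B)
    (π1 : Equiv.Perm (Fin M1)) (π2 : Equiv.Perm (Fin M2)) :
    mlSetPair W (c1 ∘ π1) (c2 ∘ π2) y
      = (mlSetPair W c1 c2 y).map (π1.prodCongr π2).symm.toEmbedding := by
  ext kl
  simp only [mlSetPair, Finset.mem_map, Finset.mem_filter, Finset.mem_univ, true_and,
    Equiv.toEmbedding_apply, Equiv.prodCongr_symm, Equiv.prodCongr_apply, Function.comp]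
  constructor
  · intro h
    refine ⟨(π1 kl.1, π2 kl.2), fun mn => ?_, by simp⟩
    have := h (π1.symm mn.1, π2.symm mn.2)
    simpa using this
  · rintro ⟨mn, hmn, hEq⟩
    intro mn'
    have h1 : kl.1 = π1.symm mn.1 := by rw [← hEq]; rfl
    have h2 : kl.2 = π2.symm mn.2 := by rw [← hEq]; rfl
    rw [h1, h2]
    simpa using hmn (π1 mn'.1, π2 mn'.2)

lemma comp_bijective {α X : Type*} (π : Equiv.Perm α) :
    Function.Bijective (fun c : α → X => c ∘ π) := by
  constructor
  · intro a b h
    funext x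
    have := congrFun h (π.symm x)
    simpa using this
  · intro c
    exact ⟨c ∘ π.symm, by funext x; simp⟩

lemma sum_error_symmetrize {X1 X2 Y : Type*} [Fintype X1] [Fintype X2] [Fintype Y]
    {M1 M2 : ℕ} (W : X1 → X2 → Y → ℝ)
    (P1cb : (Fin M1 → X1) → ℝ) (P2cb : (Fin M2 → X2) → ℝ)
    (hP1 : ∀ (π : Equiv.Perm (Fin M1)) v, P1cb (v ∘ π) = P1cb v)
    (hP2 : ∀ (π : Equiv.Perm (Fin M2)) v, P2cb (v ∘ π) = P2cb v)
    (i0 i : Fin M1) (j0 j : Fin M2) :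
    (∑ c1, ∑ c2, P1cb c1 * P2cb c2 * (∑ y, W (c1 i) (c2 j) y *
      (1 - if (i, j) ∈ mlSetPair W c1 c2 y
        then ((mlSetPair W c1 c2 y).card : ℝ)⁻¹ else 0)))
    = ∑ c1, ∑ c2, P1cb c1 * P2cb c2 * (∑ y, W (c1 i0) (c2 j0) y *
      (1 - if (i0, j0) ∈ mlSetPair W c1 c2 y
        then ((mlSetPair W c1 c2 y).card : ℝ)⁻¹ else 0)) := by
  set π1 : Equiv.Perm (Fin M1) := Equiv.swap i0 i with hπ1
  set π2 : Equiv.Perm (Fin M2) := Equiv.swap j0 j with hπ2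
  refine (Fintype.sum_bijective (fun c : Fin M1 → X1 => c ∘ π1) (comp_bijective π1) _ _
    (fun c1 => ?_)).symm
  refine Fintype.sum_bijective (fun c : Fin M2 → X2 => c ∘ π2) (comp_bijective π2) _ _
    (fun c2 => ?_)
  rw [hP1, hP2]
  congr 1
  refine Finset.sum_congr rfl (fun y _ => ?_)
  have hml := mlSetPair_comp W c1 c2 y π1 π2
  have hc : ((mlSetPair W (c1 ∘ π1) (c2 ∘ π2) y).card : ℝ)
      = ((mlSetPair W c1 c2 y).card : ℝ) := by rw [hml, Finset.card_map]
  have hmem : ((i, j) ∈ mlSetPair W (c1 ∘ π1) (c2 ∘ π2) y)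
      ↔ ((i0, j0) ∈ mlSetPair W c1 c2 y) := by
    rw [hml, Finset.mem_map_equiv]
    simp [hπ1, hπ2, Equiv.swap_apply_right]
  have hW : W ((c1 ∘ π1) i) ((c2 ∘ π2) j) y = W (c1 i0) (c2 j0) y := by
    simp [hπ1, hπ2, Equiv.swap_apply_right]
  rw [hW]
  congr 1
  by_cases h : (i0, j0) ∈ mlSetPair W c1 c2 y
  · rw [if_pos (hmem.mpr h), if_pos h, hc]
  · rw [if_neg (fun hh => h (hmem.mp hh)), if_neg h]

lemma tie_bound {A1 A2 B : Type*} {M1 M2 : ℕ} (W : A1 → A2 → B → ℝ)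
    (c1 : Fin M1 → A1) (c2 : Fin M2 → A2) (y : B) (i0 : Fin M1) (j0 : Fin M2) :
    (1 - if (i0, j0) ∈ mlSetPair W c1 c2 y
        then ((mlSetPair W c1 c2 y).card : ℝ)⁻¹ else 0)
    ≤ min 1
      ((∑ k ∈ Finset.univ.filter (· ≠ i0),
          if W (c1 i0) (c2 j0) y ≤ W (c1 k) (c2 j0) y then (1:ℝ) else 0)
       + (∑ l ∈ Finset.univ.filter (· ≠ j0),
          if W (c1 i0) (c2 j0) y ≤ W (c1 i0) (c2 l) y then (1:ℝ) else 0)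
       + (∑ k ∈ Finset.univ.filter (· ≠ i0), ∑ l ∈ Finset.univ.filter (· ≠ j0),
          if W (c1 i0) (c2 j0) y ≤ W (c1 k) (c2 l) y then (1:ℝ) else 0)) := by
  set T := W (c1 i0) (c2 j0) y with hT
  set S1 : ℝ := ∑ k ∈ Finset.univ.filter (· ≠ i0),
      if T ≤ W (c1 k) (c2 j0) y then (1:ℝ) else 0 with hS1
  set S2 : ℝ := ∑ l ∈ Finset.univ.filter (· ≠ j0),
      if T ≤ W (c1 i0) (c2 l) y then (1:ℝ) else 0 with hS2
  set S12 : ℝ := ∑ k ∈ Finset.univ.filter (· ≠ i0), ∑ l ∈ Finset.univ.filter (· ≠ j0),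
      if T ≤ W (c1 k) (c2 l) y then (1:ℝ) else 0 with hS12
  have hnnS1 : (0:ℝ) ≤ S1 := Finset.sum_nonneg fun k _ => by positivity
  have hnnS2 : (0:ℝ) ≤ S2 := Finset.sum_nonneg fun l _ => by positivity
  have hnnS12 : (0:ℝ) ≤ S12 :=
    Finset.sum_nonneg fun k _ => Finset.sum_nonneg fun l _ => by positivity
  by_cases hex : ∃ kl : Fin M1 × Fin M2, kl ≠ (i0, j0) ∧ T ≤ W (c1 kl.1) (c2 kl.2) y
  · obtain ⟨⟨k, l⟩, hne, hle⟩ := hex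
    simp only at hle
    have h1le : (1:ℝ) ≤ S1 + S2 + S12 := by
      rcases eq_or_ne l j0 with rfl | hl
      · have hk : k ≠ i0 := by rintro rfl; exact hne rfl
        have hs : (1:ℝ) ≤ S1 := by
          have h := Finset.single_le_sum (f := fun k' : Fin M1 =>
              if T ≤ W (c1 k') (c2 l) y then (1:ℝ) else 0)
            (fun k' _ => by positivity)
            (show k ∈ Finset.univ.filter (· ≠ i0) by simp [hk])
          rw [hS1]; simpa [hle] using h
        linarith
      · rcases eq_or_ne k i0 with rfl | hk
        · have hs : (1:ℝ) ≤ S2 := by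
            have h := Finset.single_le_sum (f := fun l' : Fin M2 =>
                if T ≤ W (c1 k) (c2 l') y then (1:ℝ) else 0)
              (fun l' _ => by positivity)
              (show l ∈ Finset.univ.filter (· ≠ j0) by simp [hl])
            rw [hS2]; simpa [hle] using h
          linarith
        · have hin : (1:ℝ) ≤ ∑ l' ∈ Finset.univ.filter (· ≠ j0),
              if T ≤ W (c1 k) (c2 l') y then (1:ℝ) else 0 := by
            have h := Finset.single_le_sum (f := fun l' : Fin M2 =>
                if T ≤ W (c1 k) (c2 l') y then (1:ℝ) else 0)
              (fun l' _ => by positivity)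
              (show l ∈ Finset.univ.filter (· ≠ j0) by simp [hl])
            simpa [hle] using h
          have hs : (1:ℝ) ≤ S12 := by
            have h := Finset.single_le_sum (f := fun k' : Fin M1 =>
                ∑ l' ∈ Finset.univ.filter (· ≠ j0),
                  if T ≤ W (c1 k') (c2 l') y then (1:ℝ) else 0)
              (fun k' _ => Finset.sum_nonneg fun l' _ => by positivity)
              (show k ∈ Finset.univ.filter (· ≠ i0) by simp [hk])
            rw [hS12]; linarith
          linarith
    refine le_trans ?_ (le_min le_rfl h1le)
    have hpos : (0:ℝ) ≤ if (i0, j0) ∈ mlSetPair W c1 c2 y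
        then ((mlSetPair W c1 c2 y).card : ℝ)⁻¹ else 0 := by positivity
    linarith
  · push_neg at hex
    have hmem : (i0, j0) ∈ mlSetPair W c1 c2 y := by
      simp only [mlSetPair, Finset.mem_filter, Finset.mem_univ, true_and]
      intro kl
      rcases eq_or_ne kl (i0, j0) with rfl | hne
      · exact le_rfl
      · exact (hex kl hne).le
    have hsingle : mlSetPair W c1 c2 y = {(i0, j0)} := by
      apply Finset.eq_singleton_iff_unique_mem.mpr
      refine ⟨hmem, fun kl hkl => ?_⟩
      by_contra hne
      have h := (Finset.mem_filter.mp hkl).2 (i0, j0)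
      exact absurd h (not_le.mpr (hex kl hne))
    rw [hsingle]
    have h0 : (1:ℝ) - (if ((i0,j0) : Fin M1 × Fin M2) ∈ ({(i0,j0)} : Finset (Fin M1 × Fin M2))
        then ((({(i0,j0)} : Finset (Fin M1 × Fin M2)).card : ℝ))⁻¹ else 0) = 0 := by simp
    rw [h0]
    exact le_min zero_le_one (by linarith)

lemma fiber_sum {X : Type*} [Fintype X] {M : ℕ} (P : (Fin M → X) → ℝ)
    (i k : Fin M) (a : X) (Q : X → ℝ)
    (hpair : ∀ b, (∑ c ∈ Finset.univ.filter (fun c : Fin M → X => c i = a ∧ c k = b), P c) = Q b)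
    (g : X → ℝ) :
    (∑ c ∈ Finset.univ.filter (fun c : Fin M → X => c i = a), P c * g (c k))
      = ∑ b, Q b * g b := by
  rw [← Finset.sum_fiberwise (Finset.univ.filter (fun c : Fin M → X => c i = a))
    (fun c => c k) (fun c => P c * g (c k))]
  refine Finset.sum_congr rfl fun b _ => ?_
  rw [Finset.filter_filter, ← hpair b, Finset.sum_mul]
  refine Finset.sum_congr rfl fun c hc => ?_
  rw [((Finset.mem_filter.mp hc).2).2]

/-- Average of a sum over the "other" indices against the fiber measure. -/
lemma T_single {X : Type*} [Fintype X] {M : ℕ} (hM : 2 ≤ M) (P : (Fin M → X) → ℝ)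
    (i0 : Fin M) (a : X) (Q : X → ℝ)
    (hpair : ∀ k : Fin M, k ≠ i0 → ∀ b,
      (∑ c ∈ Finset.univ.filter (fun c : Fin M → X => c i0 = a ∧ c k = b), P c) = Q b)
    (g : X → ℝ) :
    (∑ c ∈ Finset.univ.filter (fun c : Fin M → X => c i0 = a),
        P c * (∑ k ∈ Finset.univ.filter (· ≠ i0), g (c k)))
      = ((M : ℝ) - 1) * ∑ b, Q b * g b := by
  have h1 : (∑ c ∈ Finset.univ.filter (fun c : Fin M → X => c i0 = a),
      P c * (∑ k ∈ Finset.univ.filter (· ≠ i0), g (c k)))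
      = ∑ k ∈ Finset.univ.filter (· ≠ i0),
          ∑ c ∈ Finset.univ.filter (fun c : Fin M → X => c i0 = a), P c * g (c k) := by
    rw [Finset.sum_comm]
    refine Finset.sum_congr rfl fun c _ => ?_
    rw [Finset.mul_sum]
  rw [h1]
  have h2 : ∀ k ∈ Finset.univ.filter (· ≠ i0),
      (∑ c ∈ Finset.univ.filter (fun c : Fin M → X => c i0 = a), P c * g (c k))
        = ∑ b, Q b * g b := by
    intro k hk
    have hki : k ≠ i0 := by simpa using hk
    exact fiber_sum P i0 k a Q (hpair k hki) g
  rw [Finset.sum_congr rfl h2, Finset.sum_const]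
  have hcard : (Finset.univ.filter (· ≠ i0)).card = M - 1 := by
    rw [Finset.filter_ne' Finset.univ]
    simp
  rw [hcard, nsmul_eq_mul]
  congr 1
  have : (1:ℕ) ≤ M := by omega
  push_cast [Nat.cast_sub this]
  ring

lemma sum_swap3 {A B C M : Type*} [Fintype A] [Fintype B] [Fintype C] [AddCommMonoid M]
    (f : A → B → C → M) :
    (∑ a, ∑ b, ∑ c, f a b c) = ∑ c, ∑ a, ∑ b, f a b c := by
  calc (∑ a, ∑ b, ∑ c, f a b c) = ∑ a, ∑ c, ∑ b, f a b c :=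
        Finset.sum_congr rfl fun a _ => Finset.sum_comm
    _ = ∑ c, ∑ a, ∑ b, f a b c := Finset.sum_comm

set_option maxHeartbeats 2000000 in
/-- **Two-user RCU bound for exchangeable (possibly dependent) codebooks.** -/
theorem rcu_bound_two_user_mac
    {X1 X2 Y : Type*} [Fintype X1] [Fintype X2] [Fintype Y]
    (M1 M2 : ℕ) (hM1 : 2 ≤ M1) (hM2 : 2 ≤ M2)
    (W : X1 → X2 → Y → ℝ) (hW0 : ∀ x1 x2 y, 0 ≤ W x1 x2 y)
    (hW1 : ∀ x1 x2, ∑ y, W x1 x2 y = 1)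
    (P1cb : (Fin M1 → X1) → ℝ) (hP1cb0 : ∀ c, 0 ≤ P1cb c) (hP1cb1 : ∑ c, P1cb c = 1)
    (P2cb : (Fin M2 → X2) → ℝ) (hP2cb0 : ∀ c, 0 ≤ P2cb c) (hP2cb1 : ∑ c, P2cb c = 1)
    (hexch1 : ∀ (k : ℕ) (σ τ : Fin k → Fin M1),
      Function.Injective σ → Function.Injective τ → ∀ v : Fin k → X1,
        (∑ c ∈ Finset.univ.filter (fun c : Fin M1 → X1 => ∀ i, c (σ i) = v i), P1cb c) =
        (∑ c ∈ Finset.univ.filter (fun c : Fin M1 → X1 => ∀ i, c (τ i) = v i), P1cb c))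
    (hexch2 : ∀ (k : ℕ) (σ τ : Fin k → Fin M2),
      Function.Injective σ → Function.Injective τ → ∀ v : Fin k → X2,
        (∑ c ∈ Finset.univ.filter (fun c : Fin M2 → X2 => ∀ i, c (σ i) = v i), P2cb c) =
        (∑ c ∈ Finset.univ.filter (fun c : Fin M2 → X2 => ∀ i, c (τ i) = v i), P2cb c))
    (P1two : X1 → X1 → ℝ)
    (hP1two : ∀ a b, P1two a b =
      ∑ c ∈ Finset.univ.filter
        (fun c : Fin M1 → X1 => c ⟨0, by omega⟩ = a ∧ c ⟨1, by omega⟩ = b), P1cb c)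
    (P2two : X2 → X2 → ℝ)
    (hP2two : ∀ a b, P2two a b =
      ∑ c ∈ Finset.univ.filter
        (fun c : Fin M2 → X2 => c ⟨0, by omega⟩ = a ∧ c ⟨1, by omega⟩ = b), P2cb c)
    (Pm1 : X1 → ℝ) (hPm1 : ∀ a, Pm1 a = ∑ b, P1two a b)
    (Pm2 : X2 → ℝ) (hPm2 : ∀ a, Pm2 a = ∑ b, P2two a b)
    (Wc2 : X2 → Y → ℝ) (hWc2 : ∀ x2 y, Wc2 x2 y = ∑ x1, Pm1 x1 * W x1 x2 y)
    (Wc1 : X1 → Y → ℝ) (hWc1 : ∀ x1 y, Wc1 x1 y = ∑ x2, Pm2 x2 * W x1 x2 y)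
    (PY : Y → ℝ) (hPY : ∀ y, PY y = ∑ x1, ∑ x2, Pm1 x1 * Pm2 x2 * W x1 x2 y)
    (i1c : X1 → X2 → Y → ℝ)
    (hi1c : ∀ x1 x2 y, i1c x1 x2 y = Real.log (W x1 x2 y / Wc2 x2 y))
    (i2c : X1 → X2 → Y → ℝ)
    (hi2c : ∀ x1 x2 y, i2c x1 x2 y = Real.log (W x1 x2 y / Wc1 x1 y))
    (i12 : X1 → X2 → Y → ℝ)
    (hi12 : ∀ x1 x2 y, i12 x1 x2 y = Real.log (W x1 x2 y / PY y))
    (ε : ℝ)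
    (hε : ε = ∑ c1, ∑ c2, P1cb c1 * P2cb c2 * mlErrorMac W c1 c2) :
    ε ≤ ∑ a1, ∑ a2, ∑ y, Pm1 a1 * Pm2 a2 * W a1 a2 y *
      min 1
        ((M1 - 1 : ℝ) *
            ((∑ b1 ∈ Finset.univ.filter
                (fun b1 : X1 => i1c a1 a2 y ≤ i1c b1 a2 y), P1two a1 b1) / Pm1 a1)
          + (M2 - 1 : ℝ) *
            ((∑ b2 ∈ Finset.univ.filter
                (fun b2 : X2 => i2c a1 a2 y ≤ i2c a1 b2 y), P2two a2 b2) / Pm2 a2)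
          + (M1 - 1 : ℝ) * (M2 - 1 : ℝ) *
            ((∑ b1, ∑ b2,
                (if i12 a1 a2 y ≤ i12 b1 b2 y then P1two a1 b1 * P2two a2 b2 else 0)) /
              (Pm1 a1 * Pm2 a2))) := by
  classical
  set i0 : Fin M1 := ⟨0, by omega⟩ with hi0def
  set i1 : Fin M1 := ⟨1, by omega⟩ with hi1def
  set j0 : Fin M2 := ⟨0, by omega⟩ with hj0def
  set j1 : Fin M2 := ⟨1, by omega⟩ with hj1def
  have hperm1 : ∀ (π : Equiv.Perm (Fin M1)) v, P1cb (v ∘ π) = P1cb v :=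
    fun π v => exch_perm_invariant P1cb hexch1 π v
  have hperm2 : ∀ (π : Equiv.Perm (Fin M2)) v, P2cb (v ∘ π) = P2cb v :=
    fun π v => exch_perm_invariant P2cb hexch2 π v
  have hpair1 : ∀ (k : Fin M1), k ≠ i0 → ∀ a b,
      (∑ c ∈ Finset.univ.filter (fun c : Fin M1 → X1 => c i0 = a ∧ c k = b), P1cb c)
        = P1two a b := by
    intro k hk a b
    rw [hP1two a b]
    exact exch_pair_marginal hM1 P1cb hexch1 i0 k (Ne.symm hk) a b
  have hpair2 : ∀ (l : Fin M2), l ≠ j0 → ∀ a b,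
      (∑ c ∈ Finset.univ.filter (fun c : Fin M2 → X2 => c j0 = a ∧ c l = b), P2cb c)
        = P2two a b := by
    intro l hl a b
    rw [hP2two a b]
    exact exch_pair_marginal hM2 P2cb hexch2 j0 l (Ne.symm hl) a b
  have hi0i1 : i1 ≠ i0 := by simp [hi0def, hi1def, Fin.ext_iff]
  have hj0j1 : j1 ≠ j0 := by simp [hj0def, hj1def, Fin.ext_iff]
  have hP1two_nn : ∀ a b, 0 ≤ P1two a b := fun a b => by
    rw [hP1two]; exact Finset.sum_nonneg fun c _ => hP1cb0 c
  have hP2two_nn : ∀ a b, 0 ≤ P2two a b := fun a b => by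
    rw [hP2two]; exact Finset.sum_nonneg fun c _ => hP2cb0 c
  have hPm1_nn : ∀ a, 0 ≤ Pm1 a := fun a => by
    rw [hPm1]; exact Finset.sum_nonneg fun b _ => hP1two_nn a b
  have hPm2_nn : ∀ a, 0 ≤ Pm2 a := fun a => by
    rw [hPm2]; exact Finset.sum_nonneg fun b _ => hP2two_nn a b
  have hPm1_eq : ∀ a,
      (∑ c ∈ Finset.univ.filter (fun c : Fin M1 → X1 => c i0 = a), P1cb c) = Pm1 a := by
    intro a
    have h := fiber_sum P1cb i0 i1 a (P1two a) (fun b => hpair1 i1 hi0i1 a b) (fun _ => 1)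
    simpa [hPm1] using h
  have hPm2_eq : ∀ a,
      (∑ c ∈ Finset.univ.filter (fun c : Fin M2 → X2 => c j0 = a), P2cb c) = Pm2 a := by
    intro a
    have h := fiber_sum P2cb j0 j1 a (P2two a) (fun b => hpair2 j1 hj0j1 a b) (fun _ => 1)
    simpa [hPm2] using h
  -- Step 1: reduce to the first message pair by exchangeability
  have step1 : ε = ∑ c1, ∑ c2, P1cb c1 * P2cb c2 * (∑ y, W (c1 i0) (c2 j0) y *
      (1 - if (i0, j0) ∈ mlSetPair W c1 c2 y
        then ((mlSetPair W c1 c2 y).card : ℝ)⁻¹ else 0)) := by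
    have hK : ((M1 * M2 : ℕ) : ℝ) ≠ 0 := by positivity
    rw [hε]
    have e1 : ∀ c1 c2, P1cb c1 * P2cb c2 * mlErrorMac W c1 c2
        = ((M1 * M2 : ℕ) : ℝ)⁻¹ * (P1cb c1 * P2cb c2 * ∑ ij : Fin M1 × Fin M2, ∑ y,
            W (c1 ij.1) (c2 ij.2) y * (1 - if ij ∈ mlSetPair W c1 c2 y
              then ((mlSetPair W c1 c2 y).card : ℝ)⁻¹ else 0)) := by
      intro c1 c2; rw [mlErrorMac]; ring
    calc (∑ c1, ∑ c2, P1cb c1 * P2cb c2 * mlErrorMac W c1 c2)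
        = ((M1 * M2 : ℕ) : ℝ)⁻¹ * ∑ c1, ∑ c2, (P1cb c1 * P2cb c2 *
            ∑ ij : Fin M1 × Fin M2, ∑ y,
              W (c1 ij.1) (c2 ij.2) y * (1 - if ij ∈ mlSetPair W c1 c2 y
                then ((mlSetPair W c1 c2 y).card : ℝ)⁻¹ else 0)) := by
          rw [Finset.mul_sum]
          refine Finset.sum_congr rfl fun c1 _ => ?_
          rw [Finset.mul_sum]
          exact Finset.sum_congr rfl fun c2 _ => e1 c1 c2
      _ = ((M1 * M2 : ℕ) : ℝ)⁻¹ * ∑ c1, ∑ c2, ∑ ij : Fin M1 × Fin M2,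
            (P1cb c1 * P2cb c2 * ∑ y,
              W (c1 ij.1) (c2 ij.2) y * (1 - if ij ∈ mlSetPair W c1 c2 y
                then ((mlSetPair W c1 c2 y).card : ℝ)⁻¹ else 0)) := by
          congr 1
          refine Finset.sum_congr rfl fun c1 _ => Finset.sum_congr rfl fun c2 _ => ?_
          exact Finset.mul_sum _ _ _
      _ = ((M1 * M2 : ℕ) : ℝ)⁻¹ * ∑ ij : Fin M1 × Fin M2, ∑ c1, ∑ c2,
            (P1cb c1 * P2cb c2 * ∑ y,
              W (c1 ij.1) (c2 ij.2) y * (1 - if ij ∈ mlSetPair W c1 c2 y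
                then ((mlSetPair W c1 c2 y).card : ℝ)⁻¹ else 0)) := by
          congr 1
          exact sum_swap3 _
      _ = ((M1 * M2 : ℕ) : ℝ)⁻¹ * ∑ _ij : Fin M1 × Fin M2, ∑ c1, ∑ c2,
            (P1cb c1 * P2cb c2 * ∑ y,
              W (c1 i0) (c2 j0) y * (1 - if (i0, j0) ∈ mlSetPair W c1 c2 y
                then ((mlSetPair W c1 c2 y).card : ℝ)⁻¹ else 0)) := by
          congr 1
          refine Finset.sum_congr rfl fun ij _ => ?_
          exact sum_error_symmetrize W P1cb P2cb hperm1 hperm2 i0 ij.1 j0 ij.2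
      _ = _ := by
          rw [Finset.sum_const, Finset.card_univ, Fintype.card_prod, Fintype.card_fin,
            Fintype.card_fin, nsmul_eq_mul, ← mul_assoc, inv_mul_cancel₀ hK, one_mul]
  -- Step 2: bound the tie-breaking term
  have step2 : ε ≤ ∑ c1, ∑ c2, ∑ y, P1cb c1 * P2cb c2 * (W (c1 i0) (c2 j0) y *
      min 1
        ((∑ k ∈ Finset.univ.filter (· ≠ i0),
            if W (c1 i0) (c2 j0) y ≤ W (c1 k) (c2 j0) y then (1:ℝ) else 0)
         + (∑ l ∈ Finset.univ.filter (· ≠ j0),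
            if W (c1 i0) (c2 j0) y ≤ W (c1 i0) (c2 l) y then (1:ℝ) else 0)
         + (∑ k ∈ Finset.univ.filter (· ≠ i0), ∑ l ∈ Finset.univ.filter (· ≠ j0),
            if W (c1 i0) (c2 j0) y ≤ W (c1 k) (c2 l) y then (1:ℝ) else 0))) := by
    rw [step1]
    refine Finset.sum_le_sum fun c1 _ => Finset.sum_le_sum fun c2 _ => ?_
    refine le_trans (le_of_eq (Finset.mul_sum _ _ _)) (Finset.sum_le_sum fun y _ => ?_)
    refine mul_le_mul_of_nonneg_left ?_ (mul_nonneg (hP1cb0 c1) (hP2cb0 c2))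
    refine mul_le_mul_of_nonneg_left ?_ (hW0 _ _ _)
    exact tie_bound W c1 c2 y i0 j0
  -- Step 3: regroup by the first codewords
  have struct : ∀ H : (Fin M1 → X1) → (Fin M2 → X2) → Y → ℝ,
      (∑ c1, ∑ c2, ∑ y, H c1 c2 y)
      = ∑ a1, ∑ a2, ∑ y,
          ∑ c1 ∈ Finset.univ.filter (fun c : Fin M1 → X1 => c i0 = a1),
          ∑ c2 ∈ Finset.univ.filter (fun c : Fin M2 → X2 => c j0 = a2), H c1 c2 y := by
    intro H
    rw [← Finset.sum_fiberwise Finset.univ (fun c : Fin M1 → X1 => c i0)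
        (fun c1 => ∑ c2, ∑ y, H c1 c2 y)]
    refine Finset.sum_congr rfl fun a1 _ => ?_
    calc (∑ c1 ∈ Finset.univ.filter (fun c : Fin M1 → X1 => c i0 = a1), ∑ c2, ∑ y, H c1 c2 y)
        = ∑ c2, ∑ c1 ∈ Finset.univ.filter (fun c : Fin M1 → X1 => c i0 = a1),
            ∑ y, H c1 c2 y := Finset.sum_comm
      _ = ∑ c2, ∑ y, ∑ c1 ∈ Finset.univ.filter (fun c : Fin M1 → X1 => c i0 = a1),
            H c1 c2 y := Finset.sum_congr rfl fun c2 _ => Finset.sum_comm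
      _ = ∑ a2, ∑ c2 ∈ Finset.univ.filter (fun c : Fin M2 → X2 => c j0 = a2), ∑ y,
            ∑ c1 ∈ Finset.univ.filter (fun c : Fin M1 → X1 => c i0 = a1), H c1 c2 y :=
          (Finset.sum_fiberwise Finset.univ (fun c : Fin M2 → X2 => c j0) _).symm
      _ = ∑ a2, ∑ y, ∑ c2 ∈ Finset.univ.filter (fun c : Fin M2 → X2 => c j0 = a2),
            ∑ c1 ∈ Finset.univ.filter (fun c : Fin M1 → X1 => c i0 = a1), H c1 c2 y :=
          Finset.sum_congr rfl fun a2 _ => Finset.sum_comm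
      _ = ∑ a2, ∑ y, ∑ c1 ∈ Finset.univ.filter (fun c : Fin M1 → X1 => c i0 = a1),
            ∑ c2 ∈ Finset.univ.filter (fun c : Fin M2 → X2 => c j0 = a2), H c1 c2 y :=
          Finset.sum_congr rfl fun a2 _ => Finset.sum_congr rfl fun y _ => Finset.sum_comm
  have step3 : ε ≤ ∑ a1, ∑ a2, ∑ y,
      ∑ c1 ∈ Finset.univ.filter (fun c : Fin M1 → X1 => c i0 = a1),
      ∑ c2 ∈ Finset.univ.filter (fun c : Fin M2 → X2 => c j0 = a2),
        P1cb c1 * P2cb c2 * (W a1 a2 y *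
          min 1
            ((∑ k ∈ Finset.univ.filter (· ≠ i0),
                if W a1 a2 y ≤ W (c1 k) a2 y then (1:ℝ) else 0)
             + (∑ l ∈ Finset.univ.filter (· ≠ j0),
                if W a1 a2 y ≤ W a1 (c2 l) y then (1:ℝ) else 0)
             + (∑ k ∈ Finset.univ.filter (· ≠ i0), ∑ l ∈ Finset.univ.filter (· ≠ j0),
                if W a1 a2 y ≤ W (c1 k) (c2 l) y then (1:ℝ) else 0))) := by
    refine step2.trans (le_of_eq ?_)
    rw [struct]
    refine Finset.sum_congr rfl fun a1 _ => Finset.sum_congr rfl fun a2 _ =>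
      Finset.sum_congr rfl fun y _ => Finset.sum_congr rfl fun c1 hc1 =>
      Finset.sum_congr rfl fun c2 hc2 => ?_
    have h1 : c1 i0 = a1 := (Finset.mem_filter.mp hc1).2
    have h2 : c2 j0 = a2 := (Finset.mem_filter.mp hc2).2
    rw [h1, h2]
  -- Key per-(a1,a2,y) inequality
  have key : ∀ a1 a2 y,
      (∑ c1 ∈ Finset.univ.filter (fun c : Fin M1 → X1 => c i0 = a1),
       ∑ c2 ∈ Finset.univ.filter (fun c : Fin M2 → X2 => c j0 = a2),
        P1cb c1 * P2cb c2 * (W a1 a2 y *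
          min 1
            ((∑ k ∈ Finset.univ.filter (· ≠ i0),
                if W a1 a2 y ≤ W (c1 k) a2 y then (1:ℝ) else 0)
             + (∑ l ∈ Finset.univ.filter (· ≠ j0),
                if W a1 a2 y ≤ W a1 (c2 l) y then (1:ℝ) else 0)
             + (∑ k ∈ Finset.univ.filter (· ≠ i0), ∑ l ∈ Finset.univ.filter (· ≠ j0),
                if W a1 a2 y ≤ W (c1 k) (c2 l) y then (1:ℝ) else 0))))
      ≤ Pm1 a1 * Pm2 a2 * W a1 a2 y *
          min 1
            ((M1 - 1 : ℝ) *
                ((∑ b1 ∈ Finset.univ.filter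
                    (fun b1 : X1 => i1c a1 a2 y ≤ i1c b1 a2 y), P1two a1 b1) / Pm1 a1)
              + (M2 - 1 : ℝ) *
                ((∑ b2 ∈ Finset.univ.filter
                    (fun b2 : X2 => i2c a1 a2 y ≤ i2c a1 b2 y), P2two a2 b2) / Pm2 a2)
              + (M1 - 1 : ℝ) * (M2 - 1 : ℝ) *
                ((∑ b1, ∑ b2,
                    (if i12 a1 a2 y ≤ i12 b1 b2 y then P1two a1 b1 * P2two a2 b2 else 0)) /
                  (Pm1 a1 * Pm2 a2))) := by
    intro a1 a2 y
    by_cases hw : W a1 a2 y = 0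
    · rw [hw]
      simp only [zero_mul, mul_zero, Finset.sum_const_zero]
      exact le_rfl
    by_cases h1z : Pm1 a1 = 0
    · have h0 : (∑ c ∈ Finset.univ.filter (fun c : Fin M1 → X1 => c i0 = a1), P1cb c) = 0 := by
        rw [hPm1_eq a1]; exact h1z
      have hz : ∀ c1 ∈ Finset.univ.filter (fun c : Fin M1 → X1 => c i0 = a1), P1cb c1 = 0 :=
        fun c1 hc1 => (Finset.sum_eq_zero_iff_of_nonneg (fun c _ => hP1cb0 c)).mp h0 c1 hc1
      have hzz : (∑ c1 ∈ Finset.univ.filter (fun c : Fin M1 → X1 => c i0 = a1),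
          ∑ c2 ∈ Finset.univ.filter (fun c : Fin M2 → X2 => c j0 = a2),
            P1cb c1 * P2cb c2 * (W a1 a2 y *
              min 1
                ((∑ k ∈ Finset.univ.filter (· ≠ i0),
                    if W a1 a2 y ≤ W (c1 k) a2 y then (1:ℝ) else 0)
                 + (∑ l ∈ Finset.univ.filter (· ≠ j0),
                    if W a1 a2 y ≤ W a1 (c2 l) y then (1:ℝ) else 0)
                 + (∑ k ∈ Finset.univ.filter (· ≠ i0), ∑ l ∈ Finset.univ.filter (· ≠ j0),
                    if W a1 a2 y ≤ W (c1 k) (c2 l) y then (1:ℝ) else 0)))) = 0 :=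
        Finset.sum_eq_zero (fun c1 hc1 => Finset.sum_eq_zero
          (fun c2 _ => by rw [hz c1 hc1, zero_mul, zero_mul]))
      rw [hzz, h1z, zero_mul, zero_mul, zero_mul]
    by_cases h2z : Pm2 a2 = 0
    · have h0 : (∑ c ∈ Finset.univ.filter (fun c : Fin M2 → X2 => c j0 = a2), P2cb c) = 0 := by
        rw [hPm2_eq a2]; exact h2z
      have hz : ∀ c2 ∈ Finset.univ.filter (fun c : Fin M2 → X2 => c j0 = a2), P2cb c2 = 0 :=
        fun c2 hc2 => (Finset.sum_eq_zero_iff_of_nonneg (fun c _ => hP2cb0 c)).mp h0 c2 hc2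
      have hzz : (∑ c1 ∈ Finset.univ.filter (fun c : Fin M1 → X1 => c i0 = a1),
          ∑ c2 ∈ Finset.univ.filter (fun c : Fin M2 → X2 => c j0 = a2),
            P1cb c1 * P2cb c2 * (W a1 a2 y *
              min 1
                ((∑ k ∈ Finset.univ.filter (· ≠ i0),
                    if W a1 a2 y ≤ W (c1 k) a2 y then (1:ℝ) else 0)
                 + (∑ l ∈ Finset.univ.filter (· ≠ j0),
                    if W a1 a2 y ≤ W a1 (c2 l) y then (1:ℝ) else 0)
                 + (∑ k ∈ Finset.univ.filter (· ≠ i0), ∑ l ∈ Finset.univ.filter (· ≠ j0),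
                    if W a1 a2 y ≤ W (c1 k) (c2 l) y then (1:ℝ) else 0)))) = 0 :=
        Finset.sum_eq_zero (fun c1 _ => Finset.sum_eq_zero
          (fun c2 hc2 => by rw [hz c2 hc2, mul_zero, zero_mul]))
      rw [hzz, h2z, mul_zero, zero_mul, zero_mul]
    -- main case
    have hwpos : 0 < W a1 a2 y := (hW0 a1 a2 y).lt_of_ne (Ne.symm hw)
    have h1p : 0 < Pm1 a1 := (hPm1_nn a1).lt_of_ne (Ne.symm h1z)
    have h2p : 0 < Pm2 a2 := (hPm2_nn a2).lt_of_ne (Ne.symm h2z)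
    have hM1c : (0:ℝ) ≤ (M1:ℝ) - 1 := by
      have : (1:ℝ) ≤ (M1:ℝ) := by exact_mod_cast (by omega : 1 ≤ M1)
      linarith
    have hM2c : (0:ℝ) ≤ (M2:ℝ) - 1 := by
      have : (1:ℝ) ≤ (M2:ℝ) := by exact_mod_cast (by omega : 1 ≤ M2)
      linarith
    have hWc2p : 0 < Wc2 a2 y := by
      rw [hWc2]
      have hle := Finset.single_le_sum (f := fun x1 => Pm1 x1 * W x1 a2 y)
        (fun x _ => mul_nonneg (hPm1_nn x) (hW0 _ _ _)) (Finset.mem_univ a1)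
      have hpp : 0 < Pm1 a1 * W a1 a2 y := mul_pos h1p hwpos
      exact lt_of_lt_of_le hpp (by simpa using hle)
    have hWc1p : 0 < Wc1 a1 y := by
      rw [hWc1]
      have hle := Finset.single_le_sum (f := fun x2 => Pm2 x2 * W a1 x2 y)
        (fun x _ => mul_nonneg (hPm2_nn x) (hW0 _ _ _)) (Finset.mem_univ a2)
      have hpp : 0 < Pm2 a2 * W a1 a2 y := mul_pos h2p hwpos
      exact lt_of_lt_of_le hpp (by simpa using hle)
    have hPYp : 0 < PY y := by
      rw [hPY]
      have hle2 := Finset.single_le_sum (f := fun x2 => Pm1 a1 * Pm2 x2 * W a1 x2 y)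
        (fun x _ => mul_nonneg (mul_nonneg (hPm1_nn a1) (hPm2_nn x)) (hW0 _ _ _))
        (Finset.mem_univ a2)
      have hle1 := Finset.single_le_sum (f := fun x1 => ∑ x2, Pm1 x1 * Pm2 x2 * W x1 x2 y)
        (fun x _ => Finset.sum_nonneg fun x2 _ =>
          mul_nonneg (mul_nonneg (hPm1_nn x) (hPm2_nn x2)) (hW0 _ _ _))
        (Finset.mem_univ a1)
      have hpp : 0 < Pm1 a1 * Pm2 a2 * W a1 a2 y :=
        mul_pos (mul_pos h1p h2p) hwpos
      exact lt_of_lt_of_le (lt_of_lt_of_le hpp (by simpa using hle2)) (by simpa using hle1)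
    have hmono1 : ∀ b1, W a1 a2 y ≤ W b1 a2 y → i1c a1 a2 y ≤ i1c b1 a2 y := by
      intro b1 h
      rw [hi1c, hi1c]
      exact Real.log_le_log (div_pos hwpos hWc2p) ((div_le_div_iff_of_pos_right hWc2p).mpr h)
    have hmono2 : ∀ b2, W a1 a2 y ≤ W a1 b2 y → i2c a1 a2 y ≤ i2c a1 b2 y := by
      intro b2 h
      rw [hi2c, hi2c]
      exact Real.log_le_log (div_pos hwpos hWc1p) ((div_le_div_iff_of_pos_right hWc1p).mpr h)
    have hmono12 : ∀ b1 b2, W a1 a2 y ≤ W b1 b2 y → i12 a1 a2 y ≤ i12 b1 b2 y := by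
      intro b1 b2 h
      rw [hi12, hi12]
      exact Real.log_le_log (div_pos hwpos hPYp) ((div_le_div_iff_of_pos_right hPYp).mpr h)
    set S1 : ℝ := ∑ b1 ∈ Finset.univ.filter
        (fun b1 : X1 => i1c a1 a2 y ≤ i1c b1 a2 y), P1two a1 b1 with hS1def
    set S2 : ℝ := ∑ b2 ∈ Finset.univ.filter
        (fun b2 : X2 => i2c a1 a2 y ≤ i2c a1 b2 y), P2two a2 b2 with hS2def
    set S12 : ℝ := ∑ b1, ∑ b2,
        (if i12 a1 a2 y ≤ i12 b1 b2 y then P1two a1 b1 * P2two a2 b2 else 0) with hS12def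
    set t1 : ℝ := ∑ b1, P1two a1 b1 *
        (if W a1 a2 y ≤ W b1 a2 y then (1:ℝ) else 0) with ht1def
    set t2 : ℝ := ∑ b2, P2two a2 b2 *
        (if W a1 a2 y ≤ W a1 b2 y then (1:ℝ) else 0) with ht2def
    set t12 : ℝ := ∑ b1, P1two a1 b1 * (∑ b2, P2two a2 b2 *
        (if W a1 a2 y ≤ W b1 b2 y then (1:ℝ) else 0)) with ht12def
    have ht1S1 : t1 ≤ S1 := by
      rw [ht1def, hS1def]
      rw [Finset.sum_filter]
      refine Finset.sum_le_sum fun b1 _ => ?_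
      by_cases h : W a1 a2 y ≤ W b1 a2 y
      · rw [if_pos h, if_pos (hmono1 b1 h), mul_one]
      · rw [if_neg h, mul_zero]
        by_cases h2 : i1c a1 a2 y ≤ i1c b1 a2 y
        · rw [if_pos h2]; exact hP1two_nn a1 b1
        · rw [if_neg h2]
    have ht2S2 : t2 ≤ S2 := by
      rw [ht2def, hS2def]
      rw [Finset.sum_filter]
      refine Finset.sum_le_sum fun b2 _ => ?_
      by_cases h : W a1 a2 y ≤ W a1 b2 y
      · rw [if_pos h, if_pos (hmono2 b2 h), mul_one]
      · rw [if_neg h, mul_zero]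
        by_cases h2 : i2c a1 a2 y ≤ i2c a1 b2 y
        · rw [if_pos h2]; exact hP2two_nn a2 b2
        · rw [if_neg h2]
    have ht12S12 : t12 ≤ S12 := by
      rw [ht12def, hS12def]
      simp only [Finset.mul_sum, mul_ite, mul_one, mul_zero]
      refine Finset.sum_le_sum fun b1 _ => Finset.sum_le_sum fun b2 _ => ?_
      by_cases h : W a1 a2 y ≤ W b1 b2 y
      · rw [if_pos h, if_pos (hmono12 b1 b2 h)]
      · rw [if_neg h]
        by_cases h2 : i12 a1 a2 y ≤ i12 b1 b2 y
        · rw [if_pos h2]; exact mul_nonneg (hP1two_nn a1 b1) (hP2two_nn a2 b2)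
        · rw [if_neg h2]
    -- compute the three expectation terms
    have hU1 : (∑ c1 ∈ Finset.univ.filter (fun c : Fin M1 → X1 => c i0 = a1),
        ∑ c2 ∈ Finset.univ.filter (fun c : Fin M2 → X2 => c j0 = a2),
          P1cb c1 * P2cb c2 * (∑ k ∈ Finset.univ.filter (· ≠ i0),
            if W a1 a2 y ≤ W (c1 k) a2 y then (1:ℝ) else 0))
        = ((M1:ℝ) - 1) * t1 * Pm2 a2 := by
      have e : ∀ c1 ∈ Finset.univ.filter (fun c : Fin M1 → X1 => c i0 = a1),
          (∑ c2 ∈ Finset.univ.filter (fun c : Fin M2 → X2 => c j0 = a2),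
            P1cb c1 * P2cb c2 * (∑ k ∈ Finset.univ.filter (· ≠ i0),
              if W a1 a2 y ≤ W (c1 k) a2 y then (1:ℝ) else 0))
          = (P1cb c1 * (∑ k ∈ Finset.univ.filter (· ≠ i0),
              if W a1 a2 y ≤ W (c1 k) a2 y then (1:ℝ) else 0)) * Pm2 a2 := by
        intro c1 _
        rw [← hPm2_eq a2, Finset.mul_sum]
        exact Finset.sum_congr rfl fun c2 _ => by ring
      calc _ = ∑ c1 ∈ Finset.univ.filter (fun c : Fin M1 → X1 => c i0 = a1),
            (P1cb c1 * (∑ k ∈ Finset.univ.filter (· ≠ i0),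
              if W a1 a2 y ≤ W (c1 k) a2 y then (1:ℝ) else 0)) * Pm2 a2 :=
            Finset.sum_congr rfl e
        _ = (∑ c1 ∈ Finset.univ.filter (fun c : Fin M1 → X1 => c i0 = a1),
            P1cb c1 * (∑ k ∈ Finset.univ.filter (· ≠ i0),
              if W a1 a2 y ≤ W (c1 k) a2 y then (1:ℝ) else 0)) * Pm2 a2 :=
            (Finset.sum_mul _ _ _).symm
        _ = (((M1:ℝ) - 1) * t1) * Pm2 a2 := by
            exact congrArg (· * Pm2 a2) (T_single hM1 P1cb i0 a1 (P1two a1)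
              (fun k hk b => hpair1 k hk a1 b)
              (fun b => if W a1 a2 y ≤ W b a2 y then (1:ℝ) else 0))
        _ = ((M1:ℝ) - 1) * t1 * Pm2 a2 := by ring
    have hU2 : (∑ c1 ∈ Finset.univ.filter (fun c : Fin M1 → X1 => c i0 = a1),
        ∑ c2 ∈ Finset.univ.filter (fun c : Fin M2 → X2 => c j0 = a2),
          P1cb c1 * P2cb c2 * (∑ l ∈ Finset.univ.filter (· ≠ j0),
            if W a1 a2 y ≤ W a1 (c2 l) y then (1:ℝ) else 0))
        = Pm1 a1 * (((M2:ℝ) - 1) * t2) := by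
      have e : ∀ c1 ∈ Finset.univ.filter (fun c : Fin M1 → X1 => c i0 = a1),
          (∑ c2 ∈ Finset.univ.filter (fun c : Fin M2 → X2 => c j0 = a2),
            P1cb c1 * P2cb c2 * (∑ l ∈ Finset.univ.filter (· ≠ j0),
              if W a1 a2 y ≤ W a1 (c2 l) y then (1:ℝ) else 0))
          = P1cb c1 * (((M2:ℝ) - 1) * t2) := by
        intro c1 _
        calc _ = P1cb c1 * ∑ c2 ∈ Finset.univ.filter (fun c : Fin M2 → X2 => c j0 = a2),
              P2cb c2 * (∑ l ∈ Finset.univ.filter (· ≠ j0),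
                if W a1 a2 y ≤ W a1 (c2 l) y then (1:ℝ) else 0) := by
              rw [Finset.mul_sum]
              exact Finset.sum_congr rfl fun c2 _ => by ring
          _ = P1cb c1 * (((M2:ℝ) - 1) * t2) := by
              exact congrArg (P1cb c1 * ·) (T_single hM2 P2cb j0 a2 (P2two a2)
                (fun l hl b => hpair2 l hl a2 b)
                (fun b => if W a1 a2 y ≤ W a1 b y then (1:ℝ) else 0))
      calc _ = ∑ c1 ∈ Finset.univ.filter (fun c : Fin M1 → X1 => c i0 = a1),
            P1cb c1 * (((M2:ℝ) - 1) * t2) := Finset.sum_congr rfl e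
        _ = (∑ c1 ∈ Finset.univ.filter (fun c : Fin M1 → X1 => c i0 = a1),
            P1cb c1) * (((M2:ℝ) - 1) * t2) := (Finset.sum_mul _ _ _).symm
        _ = Pm1 a1 * (((M2:ℝ) - 1) * t2) := by rw [hPm1_eq a1]
    have hU12 : (∑ c1 ∈ Finset.univ.filter (fun c : Fin M1 → X1 => c i0 = a1),
        ∑ c2 ∈ Finset.univ.filter (fun c : Fin M2 → X2 => c j0 = a2),
          P1cb c1 * P2cb c2 * (∑ k ∈ Finset.univ.filter (· ≠ i0),
            ∑ l ∈ Finset.univ.filter (· ≠ j0),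
              if W a1 a2 y ≤ W (c1 k) (c2 l) y then (1:ℝ) else 0))
        = ((M2:ℝ) - 1) * (((M1:ℝ) - 1) * t12) := by
      have e : ∀ c1 ∈ Finset.univ.filter (fun c : Fin M1 → X1 => c i0 = a1),
          (∑ c2 ∈ Finset.univ.filter (fun c : Fin M2 → X2 => c j0 = a2),
            P1cb c1 * P2cb c2 * (∑ k ∈ Finset.univ.filter (· ≠ i0),
              ∑ l ∈ Finset.univ.filter (· ≠ j0),
                if W a1 a2 y ≤ W (c1 k) (c2 l) y then (1:ℝ) else 0))
          = P1cb c1 * (((M2:ℝ) - 1) * (∑ b2, P2two a2 b2 *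
              (∑ k ∈ Finset.univ.filter (· ≠ i0),
                if W a1 a2 y ≤ W (c1 k) b2 y then (1:ℝ) else 0))) := by
        intro c1 _
        calc _ = P1cb c1 * ∑ c2 ∈ Finset.univ.filter (fun c : Fin M2 → X2 => c j0 = a2),
              P2cb c2 * (∑ l ∈ Finset.univ.filter (· ≠ j0),
                ∑ k ∈ Finset.univ.filter (· ≠ i0),
                  if W a1 a2 y ≤ W (c1 k) (c2 l) y then (1:ℝ) else 0) := by
              rw [Finset.mul_sum]
              refine Finset.sum_congr rfl fun c2 _ => ?_
              rw [show (∑ l ∈ Finset.univ.filter (· ≠ j0),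
                  ∑ k ∈ Finset.univ.filter (· ≠ i0),
                    if W a1 a2 y ≤ W (c1 k) (c2 l) y then (1:ℝ) else 0)
                = ∑ k ∈ Finset.univ.filter (· ≠ i0),
                  ∑ l ∈ Finset.univ.filter (· ≠ j0),
                    if W a1 a2 y ≤ W (c1 k) (c2 l) y then (1:ℝ) else 0 from Finset.sum_comm]
              ring
          _ = P1cb c1 * (((M2:ℝ) - 1) * (∑ b2, P2two a2 b2 *
              (∑ k ∈ Finset.univ.filter (· ≠ i0),
                if W a1 a2 y ≤ W (c1 k) b2 y then (1:ℝ) else 0))) := by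
              exact congrArg (P1cb c1 * ·) (T_single hM2 P2cb j0 a2 (P2two a2)
                (fun l hl b => hpair2 l hl a2 b)
                (fun b => ∑ k ∈ Finset.univ.filter (· ≠ i0),
                  if W a1 a2 y ≤ W (c1 k) b y then (1:ℝ) else 0))
      have e2 : ∀ c1 : Fin M1 → X1,
          (∑ b2, P2two a2 b2 * (∑ k ∈ Finset.univ.filter (· ≠ i0),
            if W a1 a2 y ≤ W (c1 k) b2 y then (1:ℝ) else 0))
          = ∑ k ∈ Finset.univ.filter (· ≠ i0), (∑ b2, P2two a2 b2 *
              (if W a1 a2 y ≤ W (c1 k) b2 y then (1:ℝ) else 0)) := by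
        intro c1
        rw [← Finset.sum_comm]
        exact Finset.sum_congr rfl fun b2 _ => Finset.mul_sum _ _ _
      calc _ = ∑ c1 ∈ Finset.univ.filter (fun c : Fin M1 → X1 => c i0 = a1),
            P1cb c1 * (((M2:ℝ) - 1) * (∑ b2, P2two a2 b2 *
              (∑ k ∈ Finset.univ.filter (· ≠ i0),
                if W a1 a2 y ≤ W (c1 k) b2 y then (1:ℝ) else 0))) := Finset.sum_congr rfl e
        _ = ((M2:ℝ) - 1) * ∑ c1 ∈ Finset.univ.filter (fun c : Fin M1 → X1 => c i0 = a1),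
            P1cb c1 * (∑ k ∈ Finset.univ.filter (· ≠ i0), (∑ b2, P2two a2 b2 *
              (if W a1 a2 y ≤ W (c1 k) b2 y then (1:ℝ) else 0))) := by
            rw [Finset.mul_sum]
            refine Finset.sum_congr rfl fun c1 _ => ?_
            rw [e2 c1]
            ring
        _ = ((M2:ℝ) - 1) * (((M1:ℝ) - 1) * t12) := by
            exact congrArg (((M2:ℝ) - 1) * ·) (T_single hM1 P1cb i0 a1 (P1two a1)
              (fun k hk b => hpair1 k hk a1 b)
              (fun b => ∑ b2, P2two a2 b2 *
                (if W a1 a2 y ≤ W b b2 y then (1:ℝ) else 0)))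
    -- total mass of the fiber
    have hPP : (∑ c1 ∈ Finset.univ.filter (fun c : Fin M1 → X1 => c i0 = a1),
        ∑ c2 ∈ Finset.univ.filter (fun c : Fin M2 → X2 => c j0 = a2),
          P1cb c1 * P2cb c2) = Pm1 a1 * Pm2 a2 := by
      rw [← Finset.sum_mul_sum, hPm1_eq, hPm2_eq]
    have hPPnn : 0 ≤ Pm1 a1 * Pm2 a2 := mul_nonneg (hPm1_nn a1) (hPm2_nn a2)
    -- the conditional expectation bound
    have hBle1 : (∑ c1 ∈ Finset.univ.filter (fun c : Fin M1 → X1 => c i0 = a1),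
        ∑ c2 ∈ Finset.univ.filter (fun c : Fin M2 → X2 => c j0 = a2),
          P1cb c1 * P2cb c2 *
          min 1
            ((∑ k ∈ Finset.univ.filter (· ≠ i0),
                if W a1 a2 y ≤ W (c1 k) a2 y then (1:ℝ) else 0)
             + (∑ l ∈ Finset.univ.filter (· ≠ j0),
                if W a1 a2 y ≤ W a1 (c2 l) y then (1:ℝ) else 0)
             + (∑ k ∈ Finset.univ.filter (· ≠ i0), ∑ l ∈ Finset.univ.filter (· ≠ j0),
                if W a1 a2 y ≤ W (c1 k) (c2 l) y then (1:ℝ) else 0)))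
        ≤ Pm1 a1 * Pm2 a2 := by
      rw [← hPP]
      refine Finset.sum_le_sum fun c1 _ => Finset.sum_le_sum fun c2 _ => ?_
      exact mul_le_of_le_one_right (mul_nonneg (hP1cb0 c1) (hP2cb0 c2)) (min_le_left _ _)
    have hBle2 : (∑ c1 ∈ Finset.univ.filter (fun c : Fin M1 → X1 => c i0 = a1),
        ∑ c2 ∈ Finset.univ.filter (fun c : Fin M2 → X2 => c j0 = a2),
          P1cb c1 * P2cb c2 *
          min 1
            ((∑ k ∈ Finset.univ.filter (· ≠ i0),
                if W a1 a2 y ≤ W (c1 k) a2 y then (1:ℝ) else 0)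
             + (∑ l ∈ Finset.univ.filter (· ≠ j0),
                if W a1 a2 y ≤ W a1 (c2 l) y then (1:ℝ) else 0)
             + (∑ k ∈ Finset.univ.filter (· ≠ i0), ∑ l ∈ Finset.univ.filter (· ≠ j0),
                if W a1 a2 y ≤ W (c1 k) (c2 l) y then (1:ℝ) else 0)))
        ≤ ((M1:ℝ) - 1) * t1 * Pm2 a2 + Pm1 a1 * (((M2:ℝ) - 1) * t2)
            + ((M2:ℝ) - 1) * (((M1:ℝ) - 1) * t12) := by
      rw [← hU1, ← hU2, ← hU12, ← Finset.sum_add_distrib, ← Finset.sum_add_distrib]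
      refine Finset.sum_le_sum fun c1 _ => ?_
      rw [← Finset.sum_add_distrib, ← Finset.sum_add_distrib]
      refine Finset.sum_le_sum fun c2 _ => ?_
      have h := mul_le_mul_of_nonneg_left
        (min_le_right (1:ℝ)
          ((∑ k ∈ Finset.univ.filter (· ≠ i0),
              if W a1 a2 y ≤ W (c1 k) a2 y then (1:ℝ) else 0)
           + (∑ l ∈ Finset.univ.filter (· ≠ j0),
              if W a1 a2 y ≤ W a1 (c2 l) y then (1:ℝ) else 0)
           + (∑ k ∈ Finset.univ.filter (· ≠ i0), ∑ l ∈ Finset.univ.filter (· ≠ j0),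
              if W a1 a2 y ≤ W (c1 k) (c2 l) y then (1:ℝ) else 0)))
        (mul_nonneg (hP1cb0 c1) (hP2cb0 c2))
      calc P1cb c1 * P2cb c2 * min 1 _ ≤ P1cb c1 * P2cb c2 * _ := h
        _ = _ := by ring
    -- comparison with the information-density expression
    have hAle : ((M1:ℝ) - 1) * t1 * Pm2 a2 + Pm1 a1 * (((M2:ℝ) - 1) * t2)
          + ((M2:ℝ) - 1) * (((M1:ℝ) - 1) * t12)
        ≤ Pm1 a1 * Pm2 a2 *
          ((M1 - 1 : ℝ) * (S1 / Pm1 a1) + (M2 - 1 : ℝ) * (S2 / Pm2 a2)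
            + (M1 - 1 : ℝ) * (M2 - 1 : ℝ) * (S12 / (Pm1 a1 * Pm2 a2))) := by
      have hReq : Pm1 a1 * Pm2 a2 *
          ((M1 - 1 : ℝ) * (S1 / Pm1 a1) + (M2 - 1 : ℝ) * (S2 / Pm2 a2)
            + (M1 - 1 : ℝ) * (M2 - 1 : ℝ) * (S12 / (Pm1 a1 * Pm2 a2)))
          = ((M1:ℝ) - 1) * S1 * Pm2 a2 + Pm1 a1 * (((M2:ℝ) - 1) * S2)
            + ((M2:ℝ) - 1) * (((M1:ℝ) - 1) * S12) := by
        field_simp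
      rw [hReq]
      have c1le : ((M1:ℝ) - 1) * t1 * Pm2 a2 ≤ ((M1:ℝ) - 1) * S1 * Pm2 a2 :=
        mul_le_mul_of_nonneg_right (mul_le_mul_of_nonneg_left ht1S1 hM1c) (hPm2_nn a2)
      have c2le : Pm1 a1 * (((M2:ℝ) - 1) * t2) ≤ Pm1 a1 * (((M2:ℝ) - 1) * S2) :=
        mul_le_mul_of_nonneg_left (mul_le_mul_of_nonneg_left ht2S2 hM2c) (hPm1_nn a1)
      have c12le : ((M2:ℝ) - 1) * (((M1:ℝ) - 1) * t12)
          ≤ ((M2:ℝ) - 1) * (((M1:ℝ) - 1) * S12) :=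
        mul_le_mul_of_nonneg_left (mul_le_mul_of_nonneg_left ht12S12 hM1c) hM2c
      linarith
    -- put everything together
    calc (∑ c1 ∈ Finset.univ.filter (fun c : Fin M1 → X1 => c i0 = a1),
          ∑ c2 ∈ Finset.univ.filter (fun c : Fin M2 → X2 => c j0 = a2),
            P1cb c1 * P2cb c2 * (W a1 a2 y *
              min 1
                ((∑ k ∈ Finset.univ.filter (· ≠ i0),
                    if W a1 a2 y ≤ W (c1 k) a2 y then (1:ℝ) else 0)
                 + (∑ l ∈ Finset.univ.filter (· ≠ j0),
                    if W a1 a2 y ≤ W a1 (c2 l) y then (1:ℝ) else 0)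
                 + (∑ k ∈ Finset.univ.filter (· ≠ i0), ∑ l ∈ Finset.univ.filter (· ≠ j0),
                    if W a1 a2 y ≤ W (c1 k) (c2 l) y then (1:ℝ) else 0))))
        = W a1 a2 y * ∑ c1 ∈ Finset.univ.filter (fun c : Fin M1 → X1 => c i0 = a1),
          ∑ c2 ∈ Finset.univ.filter (fun c : Fin M2 → X2 => c j0 = a2),
            P1cb c1 * P2cb c2 *
              min 1
                ((∑ k ∈ Finset.univ.filter (· ≠ i0),
                    if W a1 a2 y ≤ W (c1 k) a2 y then (1:ℝ) else 0)
                 + (∑ l ∈ Finset.univ.filter (· ≠ j0),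
                    if W a1 a2 y ≤ W a1 (c2 l) y then (1:ℝ) else 0)
                 + (∑ k ∈ Finset.univ.filter (· ≠ i0), ∑ l ∈ Finset.univ.filter (· ≠ j0),
                    if W a1 a2 y ≤ W (c1 k) (c2 l) y then (1:ℝ) else 0)) := by
          rw [Finset.mul_sum]
          refine Finset.sum_congr rfl fun c1 _ => ?_
          rw [Finset.mul_sum]
          exact Finset.sum_congr rfl fun c2 _ => by ring
      _ ≤ W a1 a2 y * min (Pm1 a1 * Pm2 a2)
            (((M1:ℝ) - 1) * t1 * Pm2 a2 + Pm1 a1 * (((M2:ℝ) - 1) * t2)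
              + ((M2:ℝ) - 1) * (((M1:ℝ) - 1) * t12)) :=
          mul_le_mul_of_nonneg_left (le_min hBle1 hBle2) (hW0 a1 a2 y)
      _ ≤ W a1 a2 y * min (Pm1 a1 * Pm2 a2)
            (Pm1 a1 * Pm2 a2 *
              ((M1 - 1 : ℝ) * (S1 / Pm1 a1) + (M2 - 1 : ℝ) * (S2 / Pm2 a2)
                + (M1 - 1 : ℝ) * (M2 - 1 : ℝ) * (S12 / (Pm1 a1 * Pm2 a2)))) :=
          mul_le_mul_of_nonneg_left (min_le_min le_rfl hAle) (hW0 a1 a2 y)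
      _ = W a1 a2 y * (Pm1 a1 * Pm2 a2 *
            min 1
              ((M1 - 1 : ℝ) * (S1 / Pm1 a1) + (M2 - 1 : ℝ) * (S2 / Pm2 a2)
                + (M1 - 1 : ℝ) * (M2 - 1 : ℝ) * (S12 / (Pm1 a1 * Pm2 a2)))) := by
          rw [mul_min_of_nonneg _ _ hPPnn, mul_one]
      _ = Pm1 a1 * Pm2 a2 * W a1 a2 y *
            min 1
              ((M1 - 1 : ℝ) * (S1 / Pm1 a1) + (M2 - 1 : ℝ) * (S2 / Pm2 a2)
                + (M1 - 1 : ℝ) * (M2 - 1 : ℝ) * (S12 / (Pm1 a1 * Pm2 a2))) := by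
          ring
  exact step3.trans (Finset.sum_le_sum fun a1 _ => Finset.sum_le_sum fun a2 _ =>
    Finset.sum_le_sum fun y _ => key a1 a2 y)
end
end
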